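/- Suppose ⟨λ_i : i < i(*)⟩ is a strictly increasing sequence of regular cardinals, T_i ⊆ 2^{<λ_i} is a tree closed under initial segments with |T_i| < λ_{i+1} whenever i+1 < i(*), and B_i = {η ∈ 2^{λ_i} : every proper initial segment of η is in T_i} has cardinality ≥ μ, where μ is regular and μ > λ_i + |T_i| for each i. Then the sequence ⟨(B_i, <_lex) : i < i(*)⟩ of lexicographically ordered sets of branches is (μ, ℵ₀)-entangled. -/

import Mathlib

open Cardinal

universe u

/-- The lexicographic (strict) order on functions into `Bool`. -/
def LexLt {A : Type u} [LinearOrder A] (η ν : A → Bool) : Prop :=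
  ∃ γ : A, (∀ x, x < γ → η x = ν x) ∧ η γ < ν γ

private instance instWO_aux (o : Ordinal.{u}) : IsWellOrder o.ToType (· < ·) := isWellOrder_lt

private lemma pow_small {c x : Cardinal.{u}} (hc : ℵ₀ ≤ c) (hx : x < c) :
    ∀ n : ℕ, x ^ (n : Cardinal.{u}) < c := by
  intro n
  induction n with
  | zero => simpa using lt_of_lt_of_le one_lt_aleph0 hc
  | succ n ih =>
    have h : ((n+1 : ℕ) : Cardinal) = (n : Cardinal) + 1 := by push_cast; ring
    rw [h, power_add, power_one]
    exact mul_lt_of_lt hc ih hx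

private lemma pi_small {ι : Type u} (w : Finset ι) (g : ι → Type u) {c : Cardinal.{u}}
    (hc : c.IsRegular) (hg : ∀ i ∈ w, #(g i) < c) : #(∀ i : w, g i) < c := by
  classical
  have hemb : Function.Injective (fun (f : ∀ i : w, g i) => fun (i : w) => (⟨i, f i⟩ : Σ i : w, g i)) := by
    intro f f' h
    funext i
    exact sigma_mk_injective (by simpa using congrFun h i)
  have h1 : #(∀ i : w, g i) ≤ #(Σ i : w, g i) ^ (w.card : Cardinal) := by
    refine le_trans (Cardinal.mk_le_of_injective hemb) (le_of_eq ?_)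
    rw [← Cardinal.power_def]
    congr 1
    simp [Cardinal.mk_fintype, Fintype.card_coe]
  have h2 : #(Σ i : w, g i) < c := by
    rw [Cardinal.mk_sigma]
    refine Cardinal.sum_lt_of_isRegular hc ?_ ?_
    · refine lt_of_lt_of_le ?_ hc.1
      simp only [Cardinal.mk_fintype, Fintype.card_coe]
      exact nat_lt_aleph0 _
    · exact fun i => hg i.1 i.2
  exact lt_of_le_of_lt h1 (pow_small hc.1 h2 w.card)

private lemma bounded_of_small {c : Cardinal.{u}} (hc : c.IsRegular) {A : Set c.ord.ToType}
    (hA : #A < c) : ∃ γ' : c.ord.ToType, ∀ γ ∈ A, γ < γ' := by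
  have hlim : Order.IsSuccLimit c.ord := Cardinal.isSuccLimit_ord hc.1
  have hub : ∀ a : A, Ordinal.typein (α := c.ord.ToType) (· < ·) a.1 + 1 < c.ord := by
    intro a
    rw [Ordinal.add_one_eq_succ]
    refine hlim.succ_lt ?_
    have := Ordinal.typein_lt_type (α := c.ord.ToType) (· < ·) a.1
    rwa [Ordinal.type_toType] at this
  have ho : iSup (fun a : A => Ordinal.typein (α := c.ord.ToType) (· < ·) a.1 + 1) < c.ord :=
    Cardinal.iSup_lt_ord_of_isRegular hc hA hub
  have htype : iSup (fun a : A => Ordinal.typein (α := c.ord.ToType) (· < ·) a.1 + 1) <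
      Ordinal.type (α := c.ord.ToType) (· < ·) := by
    rw [Ordinal.type_toType]; exact ho
  obtain ⟨γ', hγ'⟩ := Ordinal.typein_surj (α := c.ord.ToType) (· < ·) htype
  refine ⟨γ', fun γ hγ => ?_⟩
  have h1 : Ordinal.typein (α := c.ord.ToType) (· < ·) γ <
      Ordinal.typein (α := c.ord.ToType) (· < ·) γ' := by
    rw [hγ']
    refine lt_of_lt_of_le (Order.lt_succ _) ?_
    rw [← Ordinal.add_one_eq_succ]
    exact Ordinal.le_iSup (fun a : A => Ordinal.typein (α := c.ord.ToType) (· < ·) a.1 + 1) ⟨γ, hγ⟩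
  exact (Ordinal.typein_lt_typein _).mp h1

private lemma node_eq {L : Type u} [LinearOrder L] {T : ∀ γ : L, Set ({x : L // x < γ} → Bool)}
    {p q : Σ γ : L, (T γ : Set _)} (h : p = q) :
    p.1 = q.1 ∧ ∀ x (hx : x < p.1) (hx' : x < q.1), p.2.1 ⟨x, hx⟩ = q.2.1 ⟨x, hx'⟩ := by
  subst h
  exact ⟨rfl, fun x hx hx' => rfl⟩

private lemma key {ι : Type u} [LinearOrder ι] (μ : Cardinal.{u}) (hμreg : μ.IsRegular)
    (lam_ : ι → Cardinal.{u}) (hregi : ∀ i, (lam_ i).IsRegular)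
    (T : ∀ i : ι, ∀ γ : (lam_ i).ord.ToType, Set ({x : (lam_ i).ord.ToType // x < γ} → Bool))
    (hTsmall : ∀ i j, i < j → #(Σ γ : (lam_ i).ord.ToType, (T i γ : Set _)) < lam_ j)
    (hμbig : ∀ i, lam_ i + #(Σ γ : (lam_ i).ord.ToType, (T i γ : Set _)) < μ)
    (t : (i : ι) → μ.ord.ToType → ((lam_ i).ord.ToType → Bool))
    (hT : ∀ i α γ, (fun x : {x : (lam_ i).ord.ToType // x < γ} => t i α x.1) ∈ T i γ)
    (hinj : ∀ i, Function.Injective (t i)) :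
    ∀ (n : ℕ) (w : Finset ι), w.card = n → ∀ (s : ι → Bool) (S : Set μ.ord.ToType), μ ≤ #S →
      ∃ ν : (i : ι) → Σ γ : (lam_ i).ord.ToType, (T i γ : Set _),
        (μ ≤ #{α : μ.ord.ToType | α ∈ S ∧ ∀ i ∈ w,
            (∀ x (hx : x < (ν i).1), t i α x = (ν i).2.1 ⟨x, hx⟩) ∧ t i α (ν i).1 = s i}) ∧
        (μ ≤ #{α : μ.ord.ToType | α ∈ S ∧ ∀ i ∈ w,
            (∀ x (hx : x < (ν i).1), t i α x = (ν i).2.1 ⟨x, hx⟩) ∧ t i α (ν i).1 = !(s i)}) := by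
  classical
  intro n
  induction n with
  | zero =>
    intro w hw s S hS
    have hw0 : w = ∅ := Finset.card_eq_zero.mp hw
    subst hw0
    have hne : ∀ i : ι, Nonempty (Σ γ : (lam_ i).ord.ToType, (T i γ : Set _)) := by
      intro i
      have h1 : Nonempty (lam_ i).ord.ToType := by
        rw [Ordinal.toType_nonempty_iff_ne_zero]
        intro h
        have := Cardinal.card_ord (lam_ i)
        rw [h, Ordinal.card_zero] at this
        exact (hregi i).pos.ne' this.symm
      have h2 : Nonempty μ.ord.ToType := by
        rw [Ordinal.toType_nonempty_iff_ne_zero]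
        intro h
        have := Cardinal.card_ord μ
        rw [h, Ordinal.card_zero] at this
        exact hμreg.pos.ne' this.symm
      obtain ⟨γ⟩ := h1
      obtain ⟨α⟩ := h2
      exact ⟨⟨γ, ⟨_, hT i α γ⟩⟩⟩
    refine ⟨fun i => Classical.choice (hne i), ?_, ?_⟩ <;>
    · refine le_trans hS (Cardinal.mk_le_mk_of_subset ?_)
      intro α hα
      exact ⟨hα, fun i hi => absurd hi (Finset.notMem_empty i)⟩
  | succ n IH =>
    intro w hw s S hS
    have hwne : w.Nonempty := Finset.card_pos.mp (by omega)
    obtain ⟨j, hjw, hjmax⟩ : ∃ j ∈ w, ∀ i ∈ w, i ≤ j :=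
      ⟨w.max' hwne, w.max'_mem hwne, fun i hi => w.le_max' i hi⟩
    set w' := w.erase j with hw'def
    have hw'card : w'.card = n := by
      rw [hw'def, Finset.card_erase_of_mem hjw, hw]
      omega
    have hltj : ∀ i ∈ w', i < j := fun i hi =>
      lt_of_le_of_ne (hjmax i (Finset.mem_of_mem_erase hi)) (Finset.ne_of_mem_erase hi)
    have hlamu : lam_ j < μ := lt_of_le_of_lt (self_le_add_right _ _) (hμbig j)
    have hNμ : #(Σ γ : (lam_ j).ord.ToType, (T j γ : Set _)) < μ :=
      lt_of_le_of_lt (self_le_add_left _ _) (hμbig j)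
    have hLcard : #((lam_ j).ord.ToType) = lam_ j := by
      rw [Cardinal.mk_toType, Cardinal.card_ord]
    set P : μ.ord.ToType → (lam_ j).ord.ToType → Set μ.ord.ToType :=
      fun a γ => {b | b ∈ S ∧ ∀ x, x < γ → t j b x = t j a x} with hPdef
    -- Step A : a fully big branch
    have stepA : ∃ a ∈ S, ∀ γ, μ ≤ #(P a γ) := by
      by_contra hcon
      push_neg at hcon
      choose g hg using fun (a : S) => hcon a.1 a.2
      set f : S → Σ γ : (lam_ j).ord.ToType, (T j γ : Set _) :=
        fun a => ⟨g a, ⟨fun x => t j a.1 x.1, hT j a.1 (g a)⟩⟩ with hfdef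
      have hcount : #S ≤ Cardinal.sum
          (fun ν0 : (Σ γ : (lam_ j).ord.ToType, (T j γ : Set _)) => #{a : S // f a = ν0}) := by
        rw [← Cardinal.mk_sigma]
        exact le_of_eq (Cardinal.mk_congr (Equiv.sigmaFiberEquiv f).symm)
      have hfib : ∀ ν0, #{a : S // f a = ν0} < μ := by
        intro ν0
        rcases isEmpty_or_nonempty {a : S // f a = ν0} with he | hne
        case inl =>
          rw [Cardinal.mk_eq_zero]
          exact hμreg.pos
        obtain ⟨a₀⟩ := hne
        refine lt_of_le_of_lt ?_ (hg a₀.1)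
        have hm : ∀ a : {a : S // f a = ν0}, a.1.1 ∈ P a₀.1.1 (g a₀.1) := by
          intro a
          obtain ⟨hγ, hfun⟩ := node_eq (a.2.trans a₀.2.symm)
          refine ⟨a.1.2, fun x hx => ?_⟩
          have hx2 : x < g a.1 := by
            rw [show g a.1 = g a₀.1 from hγ]
            exact hx
          exact hfun x hx2 hx
        refine Cardinal.mk_le_of_injective
          (f := fun a => (⟨a.1.1, hm a⟩ : P a₀.1.1 (g a₀.1))) ?_
        intro a b hab
        have hv : (⟨a.1.1, hm a⟩ : P a₀.1.1 (g a₀.1)) = ⟨b.1.1, hm b⟩ := hab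
        have hv2 := congrArg Subtype.val hv
        exact Subtype.ext (Subtype.ext hv2)
      exact absurd (hcount.trans_lt (Cardinal.sum_lt_of_isRegular hμreg hNμ hfib)) (not_lt.mpr hS)
    obtain ⟨astar, hastarS, hfull⟩ := stepA
    set F : (lam_ j).ord.ToType → Set μ.ord.ToType :=
      fun γ => {b | b ∈ P astar γ ∧ t j b γ = !(t j astar γ)} with hFdef
    -- Step B : off-branch sets are big cofinally often
    have stepB : ∀ γ₀, ∃ γ, γ₀ ≤ γ ∧ μ ≤ #(F γ) := by
      intro γ₀
      by_contra hcon
      push_neg at hcon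
      set X' : Set μ.ord.ToType := P astar γ₀ \ {astar} with hX'def
      have hXX : #(P astar γ₀) ≤ #X' + 1 := by
        refine le_trans (Cardinal.mk_le_mk_of_subset
          (show P astar γ₀ ⊆ X' ∪ {astar} from ?_)) ?_
        · intro x hx
          by_cases hxa : x = astar
          · exact Or.inr (by simp [hxa])
          · exact Or.inl ⟨hx, by simp [hxa]⟩
        · refine le_trans (Cardinal.mk_union_le _ _) ?_
          simp
      have hdiffne : ∀ b : X', {x : (lam_ j).ord.ToType | t j b.1 x ≠ t j astar x}.Nonempty := by
        intro b
        by_contra hc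
        rw [Set.not_nonempty_iff_eq_empty] at hc
        have heq : t j b.1 = t j astar := by
          funext x
          by_contra hne
          exact (Set.eq_empty_iff_forall_notMem.mp hc x) hne
        have := hinj j heq
        exact b.2.2 (by simp [this])
      set D : X' → (lam_ j).ord.ToType :=
        fun b => WellFounded.min wellFounded_lt _ (hdiffne b) with hDdef
      have hDmem : ∀ b : X', t j b.1 (D b) ≠ t j astar (D b) :=
        fun b => WellFounded.min_mem wellFounded_lt _ (hdiffne b)
      have hDleast : ∀ (b : X') (x), x < D b → t j b.1 x = t j astar x := by
        intro b x hx
        by_contra hne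
        exact WellFounded.not_lt_min wellFounded_lt _ hne hx
      have hDge : ∀ b : X', γ₀ ≤ D b := by
        intro b
        by_contra hlt
        push_neg at hlt
        exact hDmem b (b.2.1.2 (D b) hlt)
      have hbF : ∀ b : X', b.1 ∈ F (D b) := by
        intro b
        refine ⟨⟨b.2.1.1, fun x hx => hDleast b x hx⟩, ?_⟩
        exact Bool.eq_not_iff.mpr (hDmem b)
      have hcount : #X' ≤ Cardinal.sum (fun γ : (lam_ j).ord.ToType => #{b : X' // D b = γ}) := by
        rw [← Cardinal.mk_sigma]
        exact le_of_eq (Cardinal.mk_congr (Equiv.sigmaFiberEquiv D).symm)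
      have hfib : ∀ γ, #{b : X' // D b = γ} < μ := by
        intro γ
        by_cases hγ : γ₀ ≤ γ
        · refine lt_of_le_of_lt ?_ (hcon γ hγ)
          refine Cardinal.mk_le_of_injective
            (f := fun b => (⟨b.1.1, (congrArg F b.2) ▸ hbF b.1⟩ : F γ)) ?_
          intro a b hab
          have hv : (⟨a.1.1, (congrArg F a.2) ▸ hbF a.1⟩ : F γ) = ⟨b.1.1, (congrArg F b.2) ▸ hbF b.1⟩ := hab
          have hv2 := congrArg Subtype.val hv
          exact Subtype.ext (Subtype.ext hv2)
        · have : IsEmpty {b : X' // D b = γ} := ⟨fun b => hγ ((hDge b.1).trans_eq b.2)⟩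
          rw [Cardinal.mk_eq_zero]
          exact hμreg.pos
      have hX'small : #X' < μ :=
        lt_of_le_of_lt hcount (Cardinal.sum_lt_of_isRegular hμreg (by rw [hLcard]; exact hlamu) hfib)
      have hfin : #(P astar γ₀) < μ :=
        lt_of_le_of_lt hXX
          (Cardinal.add_lt_of_lt hμreg.1 hX'small (lt_of_lt_of_le one_lt_aleph0 hμreg.1))
      exact absurd hfin (not_lt.mpr (hfull γ₀))
    set OB : Set ((lam_ j).ord.ToType) := {γ | μ ≤ #(F γ)} with hOBdef
    have hsite := fun γ : OB => IH w' hw'card s (F γ.1) γ.2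
    choose Nu hNuA hNuB using hsite
    have hpig : ∃ γ₁ γ₂ : OB, γ₁.1 < γ₂.1 ∧ ∀ i ∈ w', Nu γ₁ i = Nu γ₂ i := by
      have hninj : ¬ Function.Injective (fun γ : OB => (fun i : w' => Nu γ i.1)) := by
        intro hinjφ
        have hOB : #OB < lam_ j := lt_of_le_of_lt (Cardinal.mk_le_of_injective hinjφ)
          (pi_small w' (fun i => Σ γ' : (lam_ i).ord.ToType, (T i γ' : Set _)) (hregi j)
            (fun i hi => hTsmall i j (hltj i hi)))
        obtain ⟨γb, hγb⟩ := bounded_of_small (hregi j) hOB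
        obtain ⟨γ, hge, hbig⟩ := stepB γb
        exact absurd hge (not_le.mpr (hγb γ hbig))
      obtain ⟨γ₁, γ₂, hfeq, hne⟩ := Function.not_injective_iff.mp hninj
      rcases lt_trichotomy γ₁.1 γ₂.1 with h | h | h
      · exact ⟨γ₁, γ₂, h, fun i hi => congrFun hfeq ⟨i, hi⟩⟩
      · exact absurd (Subtype.ext h) hne
      · exact ⟨γ₂, γ₁, h, fun i hi => (congrFun hfeq ⟨i, hi⟩).symm⟩
    obtain ⟨γ₁, γ₂, h12, hsame⟩ := hpig
    set νj : Σ γ' : (lam_ j).ord.ToType, (T j γ' : Set _) :=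
      ⟨γ₁.1, ⟨fun x => t j astar x.1, hT j astar γ₁.1⟩⟩ with hνjdef
    set νfin := Function.update (Nu γ₁) j νj with hνfindef
    have hνj : νfin j = νj := Function.update_self j νj (Nu γ₁)
    have hνi : ∀ i ∈ w', νfin i = Nu γ₁ i :=
      fun i hi => Function.update_of_ne (ne_of_lt (hltj i hi)) νj (Nu γ₁)
    have hlow2 : ∀ i ∈ w', νfin i = Nu γ₂ i := fun i hi => (hνi i hi).trans (hsame i hi)
    have hj1 : ∀ α ∈ F γ₁.1,
        (∀ x (hx : x < (νfin j).1), t j α x = (νfin j).2.1 ⟨x, hx⟩) ∧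
          t j α (νfin j).1 = !(t j astar γ₁.1) := by
      intro α hα
      rw [hνj]
      exact ⟨fun x hx => hα.1.2 x hx, hα.2⟩
    have hj2 : ∀ α ∈ F γ₂.1,
        (∀ x (hx : x < (νfin j).1), t j α x = (νfin j).2.1 ⟨x, hx⟩) ∧
          t j α (νfin j).1 = t j astar γ₁.1 := by
      intro α hα
      rw [hνj]
      exact ⟨fun x hx => hα.1.2 x (lt_trans hx h12), hα.1.2 γ₁.1 h12⟩
    refine ⟨νfin, ?_, ?_⟩
    · -- the s-pattern set
      by_cases hsb : s j = t j astar γ₁.1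
      · refine le_trans (hNuA γ₂) (Cardinal.mk_le_mk_of_subset ?_)
        intro α hα
        refine ⟨hα.1.1.1, fun i hi => ?_⟩
        by_cases hij : i = j
        · subst hij
          exact ⟨(hj2 α hα.1).1, (hj2 α hα.1).2.trans hsb.symm⟩
        · have hiw' : i ∈ w' := Finset.mem_erase.mpr ⟨hij, hi⟩
          rw [hlow2 i hiw']
          exact hα.2 i hiw'
      · have hsb2 : s j = !(t j astar γ₁.1) := Bool.eq_not_iff.mpr hsb
        refine le_trans (hNuA γ₁) (Cardinal.mk_le_mk_of_subset ?_)
        intro α hα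
        refine ⟨hα.1.1.1, fun i hi => ?_⟩
        by_cases hij : i = j
        · subst hij
          exact ⟨(hj1 α hα.1).1, (hj1 α hα.1).2.trans hsb2.symm⟩
        · have hiw' : i ∈ w' := Finset.mem_erase.mpr ⟨hij, hi⟩
          rw [hνi i hiw']
          exact hα.2 i hiw'
    · -- the (!s)-pattern set
      by_cases hsb : s j = t j astar γ₁.1
      · refine le_trans (hNuB γ₁) (Cardinal.mk_le_mk_of_subset ?_)
        intro α hα
        refine ⟨hα.1.1.1, fun i hi => ?_⟩
        by_cases hij : i = j
        · subst hij
          refine ⟨(hj1 α hα.1).1, (hj1 α hα.1).2.trans ?_⟩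
          rw [hsb]
        · have hiw' : i ∈ w' := Finset.mem_erase.mpr ⟨hij, hi⟩
          rw [hνi i hiw']
          exact hα.2 i hiw'
      · have hsb2 : s j = !(t j astar γ₁.1) := Bool.eq_not_iff.mpr hsb
        refine le_trans (hNuB γ₂) (Cardinal.mk_le_mk_of_subset ?_)
        intro α hα
        refine ⟨hα.1.1.1, fun i hi => ?_⟩
        by_cases hij : i = j
        · subst hij
          refine ⟨(hj2 α hα.1).1, (hj2 α hα.1).2.trans ?_⟩
          rw [hsb2, Bool.not_not]
        · have hiw' : i ∈ w' := Finset.mem_erase.mpr ⟨hij, hi⟩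
          rw [hlow2 i hiw']
          exact hα.2 i hiw'

/-- Proposition 5.1: for a strictly increasing sequence of regular cardinals
    `λ_i`, trees `T_i ⊆ 2^{<λ_i}` closed under initial segments with
    `|T_i| < λ_j` for `i < j`, whose branch sets `B_i` have cardinality `≥ μ`
    where `μ` is regular and `μ > λ_i + |T_i|`, the sequence
    `⟨(B_i, <_lex) : i < i(*)⟩` is (μ, ℵ₀)-entangled. -/
theorem stmt_8 (iStar : Ordinal.{u}) (μ : Cardinal.{u})
    (lam_ : iStar.ToType → Cardinal.{u})
    (hinc : StrictMono lam_)
    (hregi : ∀ i, (lam_ i).IsRegular)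
    (T : ∀ i : iStar.ToType, ∀ γ : (lam_ i).ord.ToType,
      Set ({x : (lam_ i).ord.ToType // x < γ} → Bool))
    (hTclosed : ∀ i γ γ' (h : γ' < γ) (s : {x : (lam_ i).ord.ToType // x < γ} → Bool),
      s ∈ T i γ → (fun x : {x : (lam_ i).ord.ToType // x < γ'} =>
        s ⟨x.1, lt_trans x.2 h⟩) ∈ T i γ')
    (hTsmall : ∀ i j, i < j →
      #(Σ γ : (lam_ i).ord.ToType, (T i γ : Set _)) < lam_ j)
    (hμreg : μ.IsRegular)
    (hμbig : ∀ i, lam_ i + #(Σ γ : (lam_ i).ord.ToType, (T i γ : Set _)) < μ)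
    (B : ∀ i : iStar.ToType, Set ((lam_ i).ord.ToType → Bool))
    (hB : ∀ i, B i = {η | ∀ γ, (fun x : {x : (lam_ i).ord.ToType // x < γ} =>
      η x.1) ∈ T i γ})
    (hBbig : ∀ i, μ ≤ #(B i)) :
    ∀ (u v : Set iStar.ToType), Disjoint u v → (u ∪ v).Finite →
      ∀ t : (i : iStar.ToType) → μ.ord.ToType → ((lam_ i).ord.ToType → Bool),
        (∀ i ∈ u ∪ v, ∀ α, t i α ∈ B i) →
        (∀ i ∈ u ∪ v, Function.Injective (t i)) →
        ∃ α β : μ.ord.ToType, α < β ∧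
          (∀ i ∈ u, LexLt (t i α) (t i β)) ∧
          (∀ i ∈ v, LexLt (t i β) (t i α)) := by
  classical
  intro u v huv hfin t hmem hinj
  have hμord : #(μ.ord.ToType) = μ := by rw [Cardinal.mk_toType, Cardinal.card_ord]
  -- replace t by a family good at every index
  have hBfun : ∀ i, ∃ f : μ.ord.ToType → ((lam_ i).ord.ToType → Bool),
      Function.Injective f ∧ ∀ α, f α ∈ B i := by
    intro i
    have h2 : #(μ.ord.ToType) ≤ #(B i) := by rw [hμord]; exact hBbig i
    obtain ⟨e⟩ := Cardinal.le_def _ _ |>.mp h2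
    exact ⟨fun α => (e α).1, fun a b hab => e.injective (Subtype.ext hab), fun α => (e α).2⟩
  choose bF hbFinj hbFmem using hBfun
  set t' : (i : iStar.ToType) → μ.ord.ToType → ((lam_ i).ord.ToType → Bool) :=
    fun i => if i ∈ u ∪ v then t i else bF i with ht'def
  have ht'eq : ∀ i ∈ u ∪ v, t' i = t i := by
    intro i hi
    show (if i ∈ u ∪ v then t i else bF i) = t i
    exact if_pos hi
  have ht'B : ∀ i α, t' i α ∈ B i := by
    intro i α
    by_cases h : i ∈ u ∪ v
    · rw [ht'eq i h]; exact hmem i h α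
    · show (if i ∈ u ∪ v then t i else bF i) α ∈ B i
      rw [if_neg h]; exact hbFmem i α
  have ht'T : ∀ i α γ, (fun x : {x : (lam_ i).ord.ToType // x < γ} => t' i α x.1) ∈ T i γ := by
    intro i α γ
    have := ht'B i α
    rw [hB i] at this
    exact this γ
  have ht'inj : ∀ i, Function.Injective (t' i) := by
    intro i
    by_cases h : i ∈ u ∪ v
    · rw [ht'eq i h]; exact hinj i h
    · show Function.Injective (if i ∈ u ∪ v then t i else bF i)
      rw [if_neg h]; exact hbFinj i
  set w : Finset iStar.ToType := hfin.toFinset with hwdef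
  have hww : ∀ i, i ∈ w ↔ i ∈ u ∪ v := fun i => Set.Finite.mem_toFinset hfin
  set s : iStar.ToType → Bool := fun i => if i ∈ v then true else false with hsdef
  obtain ⟨ν, hA, hBB⟩ := key μ hμreg lam_ hregi T hTsmall hμbig t' ht'T ht'inj
    w.card w rfl s Set.univ (by rw [Cardinal.mk_univ, hμord])
  set As : Set μ.ord.ToType := {α : μ.ord.ToType | α ∈ Set.univ ∧ ∀ i ∈ w,
      (∀ x (hx : x < (ν i).1), t' i α x = (ν i).2.1 ⟨x, hx⟩) ∧ t' i α (ν i).1 = s i} with hAsdef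
  set Bs : Set μ.ord.ToType := {α : μ.ord.ToType | α ∈ Set.univ ∧ ∀ i ∈ w,
      (∀ x (hx : x < (ν i).1), t' i α x = (ν i).2.1 ⟨x, hx⟩) ∧ t' i α (ν i).1 = !(s i)} with hBsdef
  have hAne : As.Nonempty := by
    rw [Set.nonempty_iff_ne_empty]
    intro h
    rw [h] at hA
    simp at hA
    exact hμreg.pos.ne' hA
  obtain ⟨α, hα⟩ := hAne
  have hBun : ∃ β ∈ Bs, α < β := by
    by_contra hc
    push_neg at hc
    have hsub : Bs ⊆ Set.Iic α := fun β hβ => hc β hβ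
    have h1 : μ ≤ #(Set.Iic α) := le_trans hBB (Cardinal.mk_le_mk_of_subset hsub)
    have h2 : #(Set.Iic α) < μ := by
      have h3 : #(Set.Iio α) < μ := mk_Iio_ord_toType α
      have h4 : Set.Iic α ⊆ insert α (Set.Iio α) := by
        intro x hx
        rcases eq_or_lt_of_le (Set.mem_Iic.mp hx) with h | h
        · exact Set.mem_insert_iff.mpr (Or.inl h)
        · exact Set.mem_insert_iff.mpr (Or.inr h)
      refine lt_of_le_of_lt (Cardinal.mk_le_mk_of_subset h4) ?_
      refine lt_of_le_of_lt (Cardinal.mk_insert_le) ?_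
      exact Cardinal.add_lt_of_lt hμreg.1 h3 (lt_of_lt_of_le one_lt_aleph0 hμreg.1)
    exact absurd h1 (not_le.mpr h2)
  obtain ⟨β, hβ, hαβ⟩ := hBun
  refine ⟨α, β, hαβ, ?_, ?_⟩
  · intro i hi
    have hiw : i ∈ w := (hww i).mpr (Or.inl hi)
    have hsi : s i = false := by
      have hnv : i ∉ v := fun hv => Set.disjoint_left.mp huv hi hv
      simp [hsdef, hnv]
    obtain ⟨hag1, hbit1⟩ := hα.2 i hiw
    obtain ⟨hag2, hbit2⟩ := hβ.2 i hiw
    have hti := ht'eq i (Or.inl hi)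
    refine ⟨(ν i).1, fun x hx => ?_, ?_⟩
    · rw [← hti]
      rw [hag1 x hx, hag2 x hx]
    · rw [← hti, hbit1, hbit2, hsi]
      exact Bool.false_lt_true
  · intro i hi
    have hiw : i ∈ w := (hww i).mpr (Or.inr hi)
    have hsi : s i = true := by simp [hsdef, hi]
    obtain ⟨hag1, hbit1⟩ := hα.2 i hiw
    obtain ⟨hag2, hbit2⟩ := hβ.2 i hiw
    have hti := ht'eq i (Or.inr hi)
    refine ⟨(ν i).1, fun x hx => ?_, ?_⟩
    · rw [← hti]
      rw [hag1 x hx, hag2 x hx]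
    · rw [← hti, hbit1, hbit2, hsi]
      exact Bool.false_lt_true
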